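/- Let P_n = p_1 p_2 ⋯ p_n denote the n-th primorial. Then 𝒮(P_n) = ∏_{i=2}^{n} (1 + 1/(p_i - 2)) and 𝒮(P_n) → +∞ as n → ∞ (i.e., the sequence n ↦ 𝒮(P_n), viewed in ℝ, tends to infinity). -/

import Mathlib

open Finset Filter

/-- The Sylvester factor `𝒮 n = ∏_{p ∣ n, p odd prime} (p-1)/(p-2)`. -/
noncomputable def sylvester (n : ℕ) : ℚ :=
  ∏ p ∈ n.primeFactors.erase 2, ((p : ℚ) - 1) / ((p : ℚ) - 2)

/-- The sequence of primes in increasing order (0-indexed: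
`nthPrime 0 = 2`, `nthPrime 1 = 3`, ...). -/
noncomputable def nthPrime (n : ℕ) : ℕ := Nat.nth Nat.Prime n

/-- The `n`-th primorialSeq `P n = p_1 * p_2 * ⋯ * p_n`. -/
noncomputable def primorialSeq (n : ℕ) : ℕ := ∏ i ∈ Finset.range n, nthPrime i

lemma nthPrime_inj : Function.Injective nthPrime :=
  Nat.nth_injective Nat.infinite_setOf_prime

lemma nthPrime_prime (n : ℕ) : (nthPrime n).Prime :=
  Nat.nth_mem_of_infinite Nat.infinite_setOf_prime n

lemma nthPrime_zero : nthPrime 0 = 2 := Nat.nth_prime_zero_eq_two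

lemma three_le_nthPrime {i : ℕ} (hi : 1 ≤ i) : 3 ≤ nthPrime i := by
  have h2 : nthPrime 0 < nthPrime i :=
    (Nat.nth_strictMono Nat.infinite_setOf_prime) (by omega)
  rw [nthPrime_zero] at h2
  omega

lemma sylvester_primorial (n : ℕ) : sylvester (primorialSeq n) =
    ∏ i ∈ Finset.Ico 1 n, (1 + 1 / ((nthPrime i : ℚ) - 2)) := by
  have hpf : (primorialSeq n).primeFactors = (Finset.range n).image nthPrime := by
    have hprod : primorialSeq n = ∏ p ∈ (Finset.range n).image nthPrime, p := by
      rw [primorialSeq, Finset.prod_image (fun a _ b _ h => nthPrime_inj h)]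
    rw [hprod]
    refine Nat.primeFactors_prod ?_
    simp only [Finset.mem_image]
    rintro p ⟨i, _, rfl⟩
    exact nthPrime_prime i
  have herase : ((Finset.range n).image nthPrime).erase 2
      = (Finset.Ico 1 n).image nthPrime := by
    rw [← nthPrime_zero, ← Finset.image_erase nthPrime_inj]
    congr 1
    ext i
    simp [Finset.mem_erase, Nat.one_le_iff_ne_zero]
  rw [sylvester, hpf, herase, Finset.prod_image (fun a _ b _ h => nthPrime_inj h)]
  refine Finset.prod_congr rfl fun i hi => ?_
  have h3 : 3 ≤ nthPrime i := three_le_nthPrime (Finset.mem_Ico.mp hi).1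
  have h3' : (3 : ℚ) ≤ (nthPrime i : ℚ) := by exact_mod_cast h3
  have hne : (nthPrime i : ℚ) - 2 ≠ 0 := by linarith
  field_simp
  ring

lemma one_add_sum_le_prod (s : Finset ℕ) (f : ℕ → ℝ) (h : ∀ i ∈ s, 0 ≤ f i) :
    1 + ∑ i ∈ s, f i ≤ ∏ i ∈ s, (1 + f i) := by
  induction s using Finset.cons_induction with
  | empty => simp
  | cons a s ha ih =>
    rw [Finset.sum_cons, Finset.prod_cons]
    have h1 : 0 ≤ f a := h a (Finset.mem_cons_self a s)
    have h2 : ∀ i ∈ s, 0 ≤ f i := fun i hi => h i (Finset.mem_cons_of_mem hi)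
    have h3 : 1 + ∑ i ∈ s, f i ≤ ∏ i ∈ s, (1 + f i) := ih h2
    have h4 : 0 ≤ ∑ i ∈ s, f i := Finset.sum_nonneg h2
    nlinarith

theorem sylvester_stmt14 :
    (∀ n : ℕ, sylvester (primorialSeq n) =
      ∏ i ∈ Finset.Ico 1 n, (1 + 1 / ((nthPrime i : ℚ) - 2))) ∧
    Tendsto (fun n => ((sylvester (primorialSeq n) : ℚ) : ℝ)) atTop atTop := by
  constructor
  · exact sylvester_primorial
  · -- the real-valued sequence
    set F : ℕ → ℝ := fun i => if i = 0 then 0 else 1 / ((nthPrime i : ℝ) - 2) with hF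
    have hFnonneg : ∀ i, 0 ≤ F i := by
      intro i
      rcases Nat.eq_zero_or_pos i with h | h
      · simp [hF, h]
      · have h3 : (3 : ℝ) ≤ (nthPrime i : ℝ) := by exact_mod_cast three_le_nthPrime h
        have h4 : (0 : ℝ) < (nthPrime i : ℝ) - 2 := by linarith
        simp only [hF, Nat.pos_iff_ne_zero.mp h, if_false]
        positivity
    -- F is not summable
    have hnotsum : ¬ Summable F := by
      intro hs
      have hs1 : Summable (fun i => F (i + 1)) := (summable_nat_add_iff 1).mpr hs
      have hs2 : Summable (fun i => 1 / (nthPrime (i + 1) : ℝ)) := by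
        refine hs1.of_nonneg_of_le (fun i => by positivity) fun i => ?_
        have h3 : (3 : ℝ) ≤ (nthPrime (i + 1) : ℝ) := by
          exact_mod_cast three_le_nthPrime (Nat.succ_le_succ (Nat.zero_le i))
        simp only [hF, Nat.succ_ne_zero, if_false]
        apply one_div_le_one_div_of_le <;> linarith
      have hs3 : Summable (fun i => 1 / (nthPrime i : ℝ)) :=
        (summable_nat_add_iff 1).mp hs2
      -- transfer to Nat.Primes via the equivalence
      have hbij : Function.Bijective
          (fun n => (⟨nthPrime n, nthPrime_prime n⟩ : Nat.Primes)) := by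
        constructor
        · intro a b hab
          exact nthPrime_inj (congrArg Subtype.val hab)
        · rintro ⟨p, hp⟩
          exact ⟨Nat.count Nat.Prime p, by simp [nthPrime, Nat.nth_count hp]⟩
      have := (Equiv.ofBijective _ hbij).summable_iff
        (f := fun p : Nat.Primes => (1 / p : ℝ))
      exact Nat.Primes.not_summable_one_div (this.mp hs3)
    have hsum : Tendsto (fun n => ∑ i ∈ Finset.range n, F i) atTop atTop :=
      (not_summable_iff_tendsto_nat_atTop_of_nonneg hFnonneg).mp hnotsum
    have hsum' : Tendsto (fun n => 1 + ∑ i ∈ Finset.range n, F i) atTop atTop :=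
      tendsto_atTop_add_const_left _ 1 hsum
    refine tendsto_atTop_mono (fun n => ?_) hsum'
    have key : ((sylvester (primorialSeq n) : ℚ) : ℝ)
        = ∏ i ∈ Finset.Ico 1 n, (1 + 1 / ((nthPrime i : ℝ) - 2)) := by
      rw [sylvester_primorial]
      push_cast
      rfl
    have hrange : ∑ i ∈ Finset.range n, F i
        = ∑ i ∈ Finset.Ico 1 n, (1 / ((nthPrime i : ℝ) - 2)) := by
      rcases Nat.eq_zero_or_pos n with h | h
      · simp [h]
      · rw [Finset.range_eq_Ico, ← Finset.sum_Ico_consecutive _ (Nat.zero_le 1) h]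
        have h0 : ∑ i ∈ Finset.Ico 0 1, F i = 0 := by simp [hF]
        rw [h0, zero_add]
        refine Finset.sum_congr rfl fun i hi => ?_
        have hne : i ≠ 0 := Nat.one_le_iff_ne_zero.mp (Finset.mem_Ico.mp hi).1
        simp [hF, hne]
    rw [key, hrange]
    apply one_add_sum_le_prod
    intro i hi
    have h3 : (3 : ℝ) ≤ (nthPrime i : ℝ) := by
      exact_mod_cast three_le_nthPrime (Finset.mem_Ico.mp hi).1
    have h4 : (0 : ℝ) < (nthPrime i : ℝ) - 2 := by linarith
    positivity
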